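/- Let A = e^{−3πi/5}, τ = 2/(1+√5), φ = (1+√5)/2, c = A⁸τ² − A⁴τ, e = A⁸τ − A⁴τ², a = −A⁴, and δ = A − 1. Then c = 1/δ and φ·e + a = φ²/δ. -/

import Mathlib

open Complex in
/-- With `A = e^{-3πi/5}`, `τ = 2/(1+√5)`, `φ = (1+√5)/2`, `c = A⁸τ² - A⁴τ`,
`e = A⁸τ - A⁴τ²`, `a = -A⁴` and `δ = A - 1`, one has `c = 1/δ` and
`φ·e + a = φ²/δ`. -/
theorem fib_rep_delta_identities :
    let A : ℂ := Complex.exp (-3 * Real.pi * Complex.I / 5)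
    let τ : ℂ := 2 / (1 + Real.sqrt 5)
    let φ : ℂ := (1 + Real.sqrt 5) / 2
    let c : ℂ := A ^ 8 * τ ^ 2 - A ^ 4 * τ
    let e : ℂ := A ^ 8 * τ - A ^ 4 * τ ^ 2
    let a : ℂ := -A ^ 4
    let δ : ℂ := A - 1
    c = 1 / δ ∧ φ * e + a = φ ^ 2 / δ := by
  intro A τ φ c e a δ
  have hπ := Real.pi_pos
  -- A^5 = -1
  have h5 : A ^ 5 = -1 := by
    have h3 : Complex.exp ((3:ℕ) * (Real.pi * Complex.I)) = -1 := by
      rw [Complex.exp_nat_mul, Complex.exp_pi_mul_I]; norm_num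
    push_cast at h3
    have h1 : A ^ 5 = Complex.exp ((5:ℕ) * (-3 * Real.pi * Complex.I / 5)) := by
      rw [show A = Complex.exp (-3 * Real.pi * Complex.I / 5) from rfl, ← Complex.exp_nat_mul]
    rw [h1]
    push_cast
    rw [show (5:ℂ) * (-3 * Real.pi * Complex.I / 5) = -(3 * (Real.pi * Complex.I)) by ring,
      Complex.exp_neg, h3]
    norm_num
  have hA0 : A ≠ 0 := Complex.exp_ne_zero _
  have hδ : δ ≠ 0 := by
    intro h
    have : A = 1 := by simpa [δ, sub_eq_zero] using h
    rw [this] at h5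
    norm_num at h5
  -- cos value
  have hcosr : Real.cos (3 * Real.pi / 5) = (1 - Real.sqrt 5) / 4 := by
    have h1 : 3 * Real.pi / 5 = Real.pi - 2 * (Real.pi / 5) := by ring
    have h2 : Real.sqrt 5 ^ 2 = 5 := Real.sq_sqrt (by norm_num)
    rw [h1, Real.cos_pi_sub, Real.cos_two_mul, Real.cos_pi_div_five]
    nlinarith [h2]
  -- A + A⁻¹ = (1 - √5)/2
  have hAe : A = Complex.exp ((-(3 * Real.pi / 5) : ℝ) * Complex.I) := by
    simp only [A]; push_cast; ring_nf
  have hAi : A⁻¹ = Complex.exp (((3 * Real.pi / 5 : ℝ) : ℂ) * Complex.I) := by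
    rw [hAe, ← Complex.exp_neg]; push_cast; ring_nf
  have hsum : A + A⁻¹ = ((1 : ℂ) - Real.sqrt 5) / 2 := by
    rw [hAi, hAe, Complex.exp_mul_I, Complex.exp_mul_I, Complex.ofReal_neg, Complex.cos_neg,
      Complex.sin_neg, ← Complex.ofReal_cos, hcosr]
    push_cast
    ring
  have hq : A ^ 2 + 1 = ((1 : ℂ) - Real.sqrt 5) / 2 * A := by
    field_simp at hsum
    linear_combination hsum / 2
  have hr2 : ((Real.sqrt 5 : ℂ)) ^ 2 = 5 := by
    rw [← Complex.ofReal_pow, Real.sq_sqrt] <;> norm_num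
  have hden : (1 : ℂ) + Real.sqrt 5 ≠ 0 := by
    have : (0:ℝ) < 1 + Real.sqrt 5 := by positivity
    intro h
    rw [show (1:ℂ) + Real.sqrt 5 = ((1 + Real.sqrt 5 : ℝ) : ℂ) by push_cast; ring] at h
    exact this.ne' (by exact_mod_cast h)
  set r : ℂ := (Real.sqrt 5 : ℂ) with hrdef
  have h4 : A ^ 4 = A - (1 - r) / 2 := by
    linear_combination (A ^ 2 + (1 - r) / 2 * A + (r ^ 2 - 2 * r - 3) / 4) * hq +
      ((3 - r) / 8 * A - 1 / 4) * hr2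
  have h8 : A ^ 8 = (1 - r) / 2 * (1 - A) := by
    linear_combination (A ^ 4 + A - (1 - r) / 2) * h4 + hq + (1 / 4) * hr2
  constructor
  · show A ^ 8 * τ ^ 2 - A ^ 4 * τ = 1 / δ
    simp only [τ, δ]
    have hδ' : A - 1 ≠ 0 := hδ
    have hden' : (1 : ℂ) + (Real.sqrt 5 : ℂ) ≠ 0 := hden
    field_simp
    linear_combination 4 * (A - 1) * h8 - 2 * (1 + r) * (A - 1) * h4 - 4 * hq - A * hr2
  · show φ * (A ^ 8 * τ - A ^ 4 * τ ^ 2) + -A ^ 4 = φ ^ 2 / δ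
    simp only [τ, φ, δ]
    have hδ' : A - 1 ≠ 0 := hδ
    have hden' : (1 : ℂ) + (Real.sqrt 5 : ℂ) ≠ 0 := hden
    field_simp
    linear_combination 4 * (1 + r) * (A - 1) * h8 - 4 * (3 + r) * (A - 1) * h4 +
      (2 * r ^ 2 - 4 * r - 14) * hq - ((3 + r) * A + (1 + r)) * hr2
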